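/- Let Ω ⊆ ℂ be a nonempty open set, let X = (x₁, x₂, x₃, x₄) : Ω → ℝ⁴ be a C² map, let Ψ, f₁ : Ω → ℂ be C¹ functions, and let f₂ : Ω → ℂ be holomorphic, such that X_z = Ψ·(f₁ + f₂, −i·(f₁ − f₂), 1 − f₁f₂, 1 + f₁f₂) componentwise on Ω. Define M := x₁, N := x₃ + x₄, and h := f₂. Then M_{zz̄} = (Re h)·N_{zz̄} at every point of Ω. -/

import Mathlib

open Complex

/-- Directional derivative of `f` in the direction `1` (the `u`-direction). -/
noncomputable def pdu (f : ℂ → ℂ) (z : ℂ) : ℂ := fderiv ℝ f z 1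

/-- Directional derivative of `f` in the direction `i` (the `v`-direction). -/
noncomputable def pdv (f : ℂ → ℂ) (z : ℂ) : ℂ := fderiv ℝ f z Complex.I

/-- Wirtinger derivative `f_z = (1/2)(∂_u f - i ∂_v f)`. -/
noncomputable def wz (f : ℂ → ℂ) (z : ℂ) : ℂ :=
  (1 / 2 : ℂ) * (pdu f z - Complex.I * pdv f z)

/-- Wirtinger derivative `f_z̄ = (1/2)(∂_u f + i ∂_v f)`. -/
noncomputable def wzb (f : ℂ → ℂ) (z : ℂ) : ℂ :=
  (1 / 2 : ℂ) * (pdu f z + Complex.I * pdv f z)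

/-- Mixed Wirtinger derivative `f_{zz̄} = (f_z)_z̄`. -/
noncomputable def wzzb (f : ℂ → ℂ) (z : ℂ) : ℂ := wzb (fun w => wz f w) z

/-- `P_z` for a real-valued function, regarded as ℂ-valued. -/
noncomputable def rz (P : ℂ → ℝ) (z : ℂ) : ℂ := wz (fun w => (P w : ℂ)) z

/-- `P_z̄` for a real-valued function, regarded as ℂ-valued. -/
noncomputable def rzb (P : ℂ → ℝ) (z : ℂ) : ℂ := wzb (fun w => (P w : ℂ)) z

/-- `P_{zz̄}` for a real-valued function, regarded as ℂ-valued. -/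
noncomputable def rzzb (P : ℂ → ℝ) (z : ℂ) : ℂ := wzzb (fun w => (P w : ℂ)) z

/-- Weierstrass data of the first kind on `Ω`. -/
structure IsWD1 (Ω : Set ℂ) (g : ℂ → ℂ) (P Q : ℂ → ℝ) : Prop where
  holo : ∀ z ∈ Ω, DifferentiableAt ℂ g z
  gne : ∀ z ∈ Ω, g z ≠ 0
  cP : ContDiffOn ℝ 2 P Ω
  cQ : ContDiffOn ℝ 2 Q Ω
  pde : ∀ z ∈ Ω, rzzb P z = ((‖g z‖ : ℂ)) ^ 2 * rzzb Q z
  nz : ∀ z ∈ Ω, rz P z - ((‖g z‖ : ℂ)) ^ 2 * rz Q z ≠ 0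

/-- Weierstrass data of the second kind on `Ω`. -/
structure IsWD2 (Ω : Set ℂ) (h : ℂ → ℂ) (M N : ℂ → ℝ) : Prop where
  holo : ∀ z ∈ Ω, DifferentiableAt ℂ h z
  hne : ∀ z ∈ Ω, h z ≠ 0
  cM : ContDiffOn ℝ 2 M Ω
  cN : ContDiffOn ℝ 2 N Ω
  pde : ∀ z ∈ Ω, rzzb M z = (((h z).re : ℂ)) * rzzb N z
  nz : ∀ z ∈ Ω, rz M z - (((h z).re : ℂ)) * rz N z ≠ 0

/-- Componentwise Wirtinger derivative `X_z` of an ℝ⁴-valued map. -/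
noncomputable def vz (X : ℂ → Fin 4 → ℝ) (z : ℂ) : Fin 4 → ℂ :=
  fun i => rz (fun w => X w i) z

/-- Componentwise mixed Wirtinger derivative `X_{zz̄}` of an ℝ⁴-valued map. -/
noncomputable def vzzb (X : ℂ → Fin 4 → ℝ) (z : ℂ) : Fin 4 → ℂ :=
  fun i => rzzb (fun w => X w i) z

/-- The ℂ-bilinear Lorentz form on ℂ⁴. -/
def lorC (x y : Fin 4 → ℂ) : ℂ := x 0 * y 0 + x 1 * y 1 + x 2 * y 2 - x 3 * y 3

/-- The Lorentz bilinear form on ℝ⁴. -/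
def lorR (x y : Fin 4 → ℝ) : ℝ := x 0 * y 0 + x 1 * y 1 + x 2 * y 2 - x 3 * y 3

section WirtingerHelpers

variable {f g : ℂ → ℂ} {z : ℂ}

lemma wz_def' (f : ℂ → ℂ) (z : ℂ) :
    wz f z = (1 / 2 : ℂ) * (fderiv ℝ f z 1 - Complex.I * fderiv ℝ f z Complex.I) := rfl

lemma wzb_def' (f : ℂ → ℂ) (z : ℂ) :
    wzb f z = (1 / 2 : ℂ) * (fderiv ℝ f z 1 + Complex.I * fderiv ℝ f z Complex.I) := rfl

lemma wz_congr (h : f =ᶠ[nhds z] g) : wz f z = wz g z := by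
  rw [wz_def', wz_def', h.fderiv_eq]

lemma wzb_congr (h : f =ᶠ[nhds z] g) : wzb f z = wzb g z := by
  rw [wzb_def', wzb_def', h.fderiv_eq]

lemma fderiv_conj_apply (hf : DifferentiableAt ℝ f z) (c : ℂ) :
    fderiv ℝ (fun w => (starRingEnd ℂ) (f w)) z c = (starRingEnd ℂ) (fderiv ℝ f z c) := by
  have h1 : HasFDerivAt (fun w => (starRingEnd ℂ) (f w))
      ((Complex.conjCLE : ℂ →L[ℝ] ℂ).comp (fderiv ℝ f z)) z :=
    (Complex.conjCLE.toContinuousLinearMap.hasFDerivAt).comp z hf.hasFDerivAt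
  rw [h1.fderiv]
  rfl

lemma wzb_conj (hf : DifferentiableAt ℝ f z) :
    wzb (fun w => (starRingEnd ℂ) (f w)) z = (starRingEnd ℂ) (wz f z) := by
  rw [wzb_def', wz_def', fderiv_conj_apply hf 1, fderiv_conj_apply hf Complex.I]
  rw [map_mul, map_sub, map_mul, Complex.conj_I]
  have : (starRingEnd ℂ) (1 / 2 : ℂ) = (1 / 2 : ℂ) := by
    rw [map_div₀, map_one, map_ofNat]
  rw [this]; ring

lemma wz_conj (hf : DifferentiableAt ℝ f z) :
    wz (fun w => (starRingEnd ℂ) (f w)) z = (starRingEnd ℂ) (wzb f z) := by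
  rw [wz_def', wzb_def', fderiv_conj_apply hf 1, fderiv_conj_apply hf Complex.I]
  rw [map_mul, map_add, map_mul, Complex.conj_I]
  have : (starRingEnd ℂ) (1 / 2 : ℂ) = (1 / 2 : ℂ) := by
    rw [map_div₀, map_one, map_ofNat]
  rw [this]; ring

lemma wzb_add (hf : DifferentiableAt ℝ f z) (hg : DifferentiableAt ℝ g z) :
    wzb (fun w => f w + g w) z = wzb f z + wzb g z := by
  rw [wzb_def', wzb_def', wzb_def', fderiv_fun_add hf hg]
  simp only [ContinuousLinearMap.add_apply]
  ring

lemma wz_add (hf : DifferentiableAt ℝ f z) (hg : DifferentiableAt ℝ g z) :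
    wz (fun w => f w + g w) z = wz f z + wz g z := by
  rw [wz_def', wz_def', wz_def', fderiv_fun_add hf hg]
  simp only [ContinuousLinearMap.add_apply]
  ring

lemma wzb_const_mul (hf : DifferentiableAt ℝ f z) (c : ℂ) :
    wzb (fun w => c * f w) z = c * wzb f z := by
  rw [wzb_def', wzb_def', fderiv_const_mul hf c]
  simp only [ContinuousLinearMap.coe_smul', Pi.smul_apply, smul_eq_mul]
  ring

lemma wzb_mul (hf : DifferentiableAt ℝ f z) (hg : DifferentiableAt ℝ g z) :
    wzb (fun w => f w * g w) z = wzb f z * g z + f z * wzb g z := by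
  rw [wzb_def', wzb_def', wzb_def', fderiv_fun_mul hf hg]
  simp only [ContinuousLinearMap.add_apply, ContinuousLinearMap.coe_smul', Pi.smul_apply,
    smul_eq_mul]
  ring

lemma wzb_holo (hf : DifferentiableAt ℂ f z) : wzb f z = 0 := by
  rw [wzb_def']
  have h1 : fderiv ℝ f z = (fderiv ℂ f z).restrictScalars ℝ :=
    (hf.hasFDerivAt.restrictScalars ℝ).fderiv
  rw [h1]
  simp only [ContinuousLinearMap.coe_restrictScalars']
  have h2 : fderiv ℂ f z Complex.I = Complex.I * fderiv ℂ f z 1 := by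
    have := (fderiv ℂ f z).map_smul Complex.I (1 : ℂ)
    simpa [smul_eq_mul] using this
  rw [h2]
  linear_combination (1 / 2 : ℂ) * fderiv ℂ f z 1 * Complex.I_mul_I

lemma diff_fderiv_apply (h2 : ContDiffAt ℝ 2 f z) (c : ℂ) :
    DifferentiableAt ℝ (fun w => fderiv ℝ f w c) z := by
  have hd : DifferentiableAt ℝ (fderiv ℝ f) z :=
    (h2.fderiv_right (m := 1) (by norm_num)).differentiableAt one_ne_zero
  exact hd.clm_apply (differentiableAt_const c)

lemma fderiv_fderiv_apply (h2 : ContDiffAt ℝ 2 f z) (c d : ℂ) :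
    fderiv ℝ (fun w => fderiv ℝ f w c) z d = fderiv ℝ (fderiv ℝ f) z d c := by
  have hd : DifferentiableAt ℝ (fderiv ℝ f) z :=
    (h2.fderiv_right (m := 1) (by norm_num)).differentiableAt one_ne_zero
  rw [fderiv_clm_apply hd (differentiableAt_const c)]
  simp

lemma diff_wz (h2 : ContDiffAt ℝ 2 f z) : DifferentiableAt ℝ (wz f) z := by
  have h1 := diff_fderiv_apply h2 1
  have hI := diff_fderiv_apply h2 Complex.I
  exact ((h1.sub (hI.const_mul Complex.I)).const_mul _)

lemma diff_wzb (h2 : ContDiffAt ℝ 2 f z) : DifferentiableAt ℝ (wzb f) z := by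
  have h1 := diff_fderiv_apply h2 1
  have hI := diff_fderiv_apply h2 Complex.I
  exact ((h1.add (hI.const_mul Complex.I)).const_mul _)

lemma schwarz (h2 : ContDiffAt ℝ 2 f z) : wz (wzb f) z = wzb (wz f) z := by
  have hsymm := h2.isSymmSndFDerivAt (by simp [minSmoothness_of_isRCLikeNormedField])
  have h1 := diff_fderiv_apply h2 1
  have hI := diff_fderiv_apply h2 Complex.I
  have keyb : ∀ d : ℂ, fderiv ℝ (wzb f) z d
      = (1 / 2 : ℂ) * (fderiv ℝ (fderiv ℝ f) z d 1
        + Complex.I * fderiv ℝ (fderiv ℝ f) z d Complex.I) := by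
    intro d
    have heq : wzb f = fun w => (1 / 2 : ℂ)
        * (fderiv ℝ f w 1 + Complex.I * fderiv ℝ f w Complex.I) := rfl
    rw [heq, fderiv_const_mul (h1.fun_add (hI.const_mul Complex.I)) _]
    simp only [ContinuousLinearMap.coe_smul', Pi.smul_apply, smul_eq_mul]
    rw [fderiv_fun_add h1 (hI.const_mul Complex.I)]
    simp only [ContinuousLinearMap.add_apply]
    rw [fderiv_const_mul hI Complex.I]
    simp only [ContinuousLinearMap.coe_smul', Pi.smul_apply, smul_eq_mul]
    rw [fderiv_fderiv_apply h2 1 d, fderiv_fderiv_apply h2 Complex.I d]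
  have keyz : ∀ d : ℂ, fderiv ℝ (wz f) z d
      = (1 / 2 : ℂ) * (fderiv ℝ (fderiv ℝ f) z d 1
        - Complex.I * fderiv ℝ (fderiv ℝ f) z d Complex.I) := by
    intro d
    have heq : wz f = fun w => (1 / 2 : ℂ)
        * (fderiv ℝ f w 1 - Complex.I * fderiv ℝ f w Complex.I) := rfl
    rw [heq, fderiv_const_mul (h1.fun_sub (hI.const_mul Complex.I)) _]
    simp only [ContinuousLinearMap.coe_smul', Pi.smul_apply, smul_eq_mul]
    rw [fderiv_fun_sub h1 (hI.const_mul Complex.I)]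
    simp only [ContinuousLinearMap.sub_apply]
    rw [fderiv_const_mul hI Complex.I]
    simp only [ContinuousLinearMap.coe_smul', Pi.smul_apply, smul_eq_mul]
    rw [fderiv_fderiv_apply h2 1 d, fderiv_fderiv_apply h2 Complex.I d]
  rw [wz_def', wzb_def', keyb 1, keyb Complex.I, keyz 1, keyz Complex.I]
  have hs : fderiv ℝ (fderiv ℝ f) z Complex.I 1 = fderiv ℝ (fderiv ℝ f) z 1 Complex.I :=
    hsymm Complex.I 1
  rw [hs]
  ring

lemma rzzb_real {P : ℂ → ℝ} {z : ℂ} (h2 : ContDiffAt ℝ 2 (fun w => ((P w : ℝ) : ℂ)) z) :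
    (starRingEnd ℂ) (rzzb P z) = rzzb P z := by
  set F : ℂ → ℂ := fun w => ((P w : ℝ) : ℂ) with hF
  have hdF : ∀ᶠ w in nhds z, DifferentiableAt ℝ F w := by
    filter_upwards [h2.eventually (by simp)] with w hw
    exact hw.differentiableAt two_ne_zero
  have hconjeq : (fun w => (starRingEnd ℂ) (wz F w)) =ᶠ[nhds z] wzb F := by
    filter_upwards [hdF] with w hw
    have h3 := wzb_conj (f := F) (z := w) hw
    have hFc : (fun y => (starRingEnd ℂ) (F y)) = F := by
      funext y; exact Complex.conj_ofReal _
    rw [hFc] at h3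
    exact h3.symm
  calc (starRingEnd ℂ) (rzzb P z) = (starRingEnd ℂ) (wzb (wz F) z) := rfl
    _ = wz (fun w => (starRingEnd ℂ) (wz F w)) z := (wz_conj (diff_wz h2)).symm
    _ = wz (wzb F) z := wz_congr hconjeq
    _ = wzb (wz F) z := schwarz h2
    _ = rzzb P z := rfl

end WirtingerHelpers

/-- Reduction of the Liu integrable system to the second-kind Weierstrass equation. -/
theorem stmt_10 (Ω : Set ℂ) (hΩne : Ω.Nonempty) (hΩopen : IsOpen Ω)
    (X : ℂ → Fin 4 → ℝ) (hX : ∀ i, ContDiffOn ℝ 2 (fun w => X w i) Ω)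
    (Ψ f₁ f₂ : ℂ → ℂ)
    (hΨ : ContDiffOn ℝ 1 Ψ Ω) (hf₁ : ContDiffOn ℝ 1 f₁ Ω)
    (hf₂ : ∀ z ∈ Ω, DifferentiableAt ℂ f₂ z)
    (hrep : ∀ z ∈ Ω, ∀ i, vz X z i
      = Ψ z * ![f₁ z + f₂ z, -Complex.I * (f₁ z - f₂ z),
          1 - f₁ z * f₂ z, 1 + f₁ z * f₂ z] i)
    (M N : ℂ → ℝ) (hM : M = fun z => X z 0) (hN : N = fun z => X z 2 + X z 3)
    (h : ℂ → ℂ) (hh : h = f₂) :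
    ∀ z ∈ Ω, rzzb M z = (((h z).re : ℂ)) * rzzb N z := by
  subst hM hN
  rw [hh]
  intro z hz
  have hzΩ : Ω ∈ nhds z := hΩopen.mem_nhds hz
  set F : Fin 4 → ℂ → ℂ := fun i w => ((X w i : ℝ) : ℂ) with hFdef
  have hFC2 : ∀ i, ∀ w ∈ Ω, ContDiffAt ℝ 2 (F i) w := by
    intro i w hw
    have hc : ContDiffAt ℝ 2 (fun w => X w i) w := (hX i).contDiffAt (hΩopen.mem_nhds hw)
    have := (Complex.ofRealCLM.contDiff (n := 2)).contDiffAt.comp w hc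
    simpa [Function.comp_def, hFdef] using this
  have hFd : ∀ i, ∀ w ∈ Ω, DifferentiableAt ℝ (F i) w := fun i w hw =>
    (hFC2 i w hw).differentiableAt two_ne_zero
  -- differentiability at z
  have hΨd : DifferentiableAt ℝ Ψ z := (hΨ.contDiffAt hzΩ).differentiableAt one_ne_zero
  have hf₁d : DifferentiableAt ℝ f₁ z := (hf₁.contDiffAt hzΩ).differentiableAt one_ne_zero
  have hf₂d : DifferentiableAt ℝ f₂ z := (hf₂ z hz).restrictScalars ℝ
  set A := wzb Ψ z with hA
  set B := wzb (fun w => Ψ w * f₁ w) z with hB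
  -- representation of wz (F i) on Ω
  have hrep' : ∀ w ∈ Ω, ∀ i, wz (F i) w
      = Ψ w * ![f₁ w + f₂ w, -Complex.I * (f₁ w - f₂ w),
          1 - f₁ w * f₂ w, 1 + f₁ w * f₂ w] i := by
    intro w hw i
    have := hrep w hw i
    simpa [vz, rz, hFdef] using this
  -- eq0 : rzzb (X · 0)
  have eq0 : rzzb (fun w => X w 0) z = B + A * f₂ z := by
    have hev : (fun w => wz (F 0) w) =ᶠ[nhds z]
        (fun w => Ψ w * f₁ w + Ψ w * f₂ w) := by
      filter_upwards [hzΩ] with w hw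
      have := hrep' w hw 0
      simp only [Matrix.cons_val_zero] at this
      rw [this]; ring
    have h1 : rzzb (fun w => X w 0) z = wzb (fun w => Ψ w * f₁ w + Ψ w * f₂ w) z :=
      wzb_congr hev
    rw [h1, wzb_add (f := fun w => Ψ w * f₁ w) (g := fun w => Ψ w * f₂ w) (hΨd.mul hf₁d) (hΨd.mul hf₂d), wzb_mul hΨd hf₂d,
      wzb_holo (hf₂ z hz)]
    ring
  -- eq1 : rzzb (X · 1)
  have eq1 : rzzb (fun w => X w 1) z = -Complex.I * (B - A * f₂ z) := by
    have hev : (fun w => wz (F 1) w) =ᶠ[nhds z]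
        (fun w => (-Complex.I) * (Ψ w * f₁ w) + Complex.I * (Ψ w * f₂ w)) := by
      filter_upwards [hzΩ] with w hw
      have := hrep' w hw 1
      simp only [Matrix.cons_val_one, Matrix.head_cons, Matrix.cons_val_zero] at this
      rw [this]; ring
    have h1 : rzzb (fun w => X w 1) z
        = wzb (fun w => (-Complex.I) * (Ψ w * f₁ w) + Complex.I * (Ψ w * f₂ w)) z :=
      wzb_congr hev
    rw [h1, wzb_add (f := fun w => (-Complex.I) * (Ψ w * f₁ w)) (g := fun w => Complex.I * (Ψ w * f₂ w))
        ((hΨd.mul hf₁d).const_mul _) ((hΨd.mul hf₂d).const_mul _),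
      wzb_const_mul (f := fun w => Ψ w * f₁ w) (hΨd.mul hf₁d),
      wzb_const_mul (f := fun w => Ψ w * f₂ w) (hΨd.mul hf₂d),
      wzb_mul hΨd hf₂d, wzb_holo (hf₂ z hz)]
    ring
  -- eq2 : rzzb N
  have eq2 : rzzb (fun w => X w 2 + X w 3) z = 2 * A := by
    have hev : (fun w => wz (fun y => ((X y 2 + X y 3 : ℝ) : ℂ)) w) =ᶠ[nhds z]
        (fun w => 2 * Ψ w) := by
      filter_upwards [hzΩ] with w hw
      have hadd : (fun y => ((X y 2 + X y 3 : ℝ) : ℂ)) = fun y => F 2 y + F 3 y := by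
        funext y; push_cast [hFdef]; ring
      rw [hadd, wz_add (hFd 2 w hw) (hFd 3 w hw), hrep' w hw 2, hrep' w hw 3]
      simp only [Matrix.cons_val_two, Matrix.tail_cons, Matrix.head_cons,
        Matrix.cons_val_three]
      ring
    have h1 : rzzb (fun w => X w 2 + X w 3) z = wzb (fun w => 2 * Ψ w) z :=
      wzb_congr hev
    rw [h1, wzb_const_mul hΨd]
  -- reality facts
  have r0 : (starRingEnd ℂ) (rzzb (fun w => X w 0) z) = rzzb (fun w => X w 0) z :=
    rzzb_real (hFC2 0 z hz)
  have r1 : (starRingEnd ℂ) (rzzb (fun w => X w 1) z) = rzzb (fun w => X w 1) z :=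
    rzzb_real (hFC2 1 z hz)
  have rN : (starRingEnd ℂ) (rzzb (fun w => X w 2 + X w 3) z)
      = rzzb (fun w => X w 2 + X w 3) z := by
    have hC2 : ContDiffAt ℝ 2 (fun w => ((X w 2 + X w 3 : ℝ) : ℂ)) z := by
      have hadd : (fun y => ((X y 2 + X y 3 : ℝ) : ℂ)) = fun y => F 2 y + F 3 y := by
        funext y; push_cast [hFdef]; ring
      rw [hadd]
      exact (hFC2 2 z hz).add (hFC2 3 z hz)
    exact rzzb_real hC2
  rw [eq0, eq1] at *
  rw [eq2] at rN ⊢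
  have hre : (((f₂ z).re : ℝ) : ℂ) = (f₂ z + (starRingEnd ℂ) (f₂ z)) / 2 := by
    rw [Complex.add_conj]; push_cast; ring
  rw [hre]
  simp only [map_add, map_mul, map_sub, map_neg, map_ofNat, Complex.conj_I] at r0 r1 rN
  linear_combination (-(1 / 2) : ℂ) * r0 - Complex.I / 2 * r1
    + (starRingEnd ℂ) (f₂ z) / 2 * rN
    + (1 / 2 : ℂ) * ((starRingEnd ℂ) B - (starRingEnd ℂ) A * (starRingEnd ℂ) (f₂ z)
        + B - A * f₂ z) * Complex.I_sq
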